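/- Consider a linear CDS scheme on a CDS instance. Let e = {a, b} be a qualified edge that is internal to some unqualified path P (i.e., both a and b are nodes of P), and let M be a set of m qualified edges with e ∈ M such that the graph whose edges are M is a tree on its m+1 incident nodes and every node of P is incident to some edge of M. Then m·L ≤ (m−1)·N. -/

import Mathlib

open Matrix

/-- The row space of a matrix: the span of its rows in `Fin LZ → F`. -/
noncomputable def rowSpan {F : Type} [Field F] {N LZ : ℕ}
    (H : Matrix (Fin N) (Fin LZ) F) : Submodule F (Fin LZ → F) :=
  Submodule.span F (Set.range H)

/-- Linear correctness condition for a (qualified) pair of nodes. -/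
def CorrectPair (F : Type) [Field F] (L N LZ : ℕ)
    (Fv Fu : Matrix (Fin N) (Fin L) F) (Hv Hu : Matrix (Fin N) (Fin LZ) F) : Prop :=
  ∀ (k : ℕ) (Pv Pu : Matrix (Fin k) (Fin N) F),
    Pv * Hv = Pu * Hu →
    Pv.rank = Module.finrank F ↥(rowSpan Hv ⊓ rowSpan Hu) →
    Pu.rank = Module.finrank F ↥(rowSpan Hv ⊓ rowSpan Hu) →
    (Pv * Fv - Pu * Fu).rank = L

/-- Linear security condition for an (unqualified) pair of nodes. -/
def SecurePair (F : Type) [Field F] (L N LZ : ℕ)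
    (Fv Fu : Matrix (Fin N) (Fin L) F) (Hv Hu : Matrix (Fin N) (Fin LZ) F) : Prop :=
  ∀ (k : ℕ) (Pv Pu : Matrix (Fin k) (Fin N) F),
    Pv * Hv = Pu * Hu → Pv * Fv = Pu * Fu

/-- A CDS instance: a bipartite graph with qualified and unqualified edges. -/
structure CDSInstance (V : Type) where
  isA : V → Prop
  qual : V → V → Prop
  unqual : V → V → Prop
  qual_symm : ∀ v u, qual v u → qual u v
  unqual_symm : ∀ v u, unqual v u → unqual u v
  qual_bip : ∀ v u, qual v u → (isA v ↔ ¬ isA u)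
  unqual_bip : ∀ v u, unqual v u → (isA v ↔ ¬ isA u)

/-- An unqualified path: a list of nodes joined consecutively by unqualified
edges, with all the (unordered) edges distinct. -/
def IsUnqualPath {V : Type} (I : CDSInstance V) (P : List V) : Prop :=
  2 ≤ P.length ∧ P.Chain' I.unqual ∧
    (List.zipWith (fun a b => s(a, b)) P P.tail).Nodup

/-- An unordered edge all of whose representatives are qualified. -/
def IsQualEdge {V : Type} (I : CDSInstance V) (e : Sym2 V) : Prop :=
  ∃ a b, e = s(a, b) ∧ I.qual a b

/-- A connected edge cover `M` of the node set of an unqualified path `P`, with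
respect to an internal qualified edge `{a, b}` of `P`. -/
def IsConnCover {V : Type} (I : CDSInstance V) (a b : V) (P : List V)
    (M : Finset (Sym2 V)) : Prop :=
  s(a, b) ∈ M ∧
  (∀ e ∈ M, IsQualEdge I e) ∧
  (∀ x y : V, (∃ e ∈ M, x ∈ e) → (∃ e ∈ M, y ∈ e) →
      Relation.ReflTransGen (fun w z => s(w, z) ∈ M) x y) ∧
  (∀ v ∈ P, ∃ e ∈ M, v ∈ e)

/-- `ρ(e, P)`: the minimum size of a connected edge cover (`+∞` if none exists). -/
noncomputable def rhoEP {V : Type} (I : CDSInstance V) (a b : V) (P : List V) : ℕ∞ :=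
  sInf ((fun M : Finset (Sym2 V) => (M.card : ℕ∞)) '' {M | IsConnCover I a b P M})

/-- `ρ`: the minimum of `ρ(e, P)` over all internal qualified edges `e` of
unqualified paths `P`. -/
noncomputable def rho {V : Type} (I : CDSInstance V) : ℕ∞ :=
  sInf {x : ℕ∞ | ∃ a b P, IsUnqualPath I P ∧ I.qual a b ∧ a ∈ P ∧ b ∈ P ∧
    x = rhoEP I a b P}

/-- A linear CDS scheme for a CDS instance. -/
def IsLinearCDSScheme {V : Type} (F : Type) [Field F] (L N LZ : ℕ) (I : CDSInstance V)
    (Fm : V → Matrix (Fin N) (Fin L) F) (Hm : V → Matrix (Fin N) (Fin LZ) F) : Prop :=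
  (∀ v, (Hm v).rank = N) ∧
  (∀ v u, I.qual v u → CorrectPair F L N LZ (Fm v) (Fm u) (Hm v) (Hm u)) ∧
  (∀ v u, I.unqual v u → SecurePair F L N LZ (Fm v) (Fm u) (Hm v) (Hm u))


namespace CDSAux
open Module Submodule

variable {F : Type} [Field F] {N LZ : ℕ}

lemma mem_rowSpan_iff {H : Matrix (Fin N) (Fin LZ) F} {x : Fin LZ → F} :
    x ∈ rowSpan H ↔ ∃ p : Fin N → F, p ᵥ* H = x := by
  rw [rowSpan]; show x ∈ span F (Set.range H.row) ↔ _; rw [← range_vecMulLinear]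
  simp [LinearMap.mem_range]

lemma finrank_rowSpan {H : Matrix (Fin N) (Fin LZ) F} (h : H.rank = N) :
    finrank F (rowSpan H) = N := by
  have h1 : Hᵀ.rank = N := by rw [Matrix.rank_transpose]; exact h
  rw [Matrix.rank_eq_finrank_span_cols] at h1
  exact h1

lemma vecMul_inj {H : Matrix (Fin N) (Fin LZ) F} (h : H.rank = N)
    {p q : Fin N → F} (hpq : p ᵥ* H = q ᵥ* H) : p = q := by
  have hr : finrank F (LinearMap.range H.vecMulLinear) = N := by
    rw [range_vecMulLinear]; exact finrank_rowSpan h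
  have hrn := LinearMap.finrank_range_add_finrank_ker H.vecMulLinear
  rw [hr] at hrn
  have hdom : finrank F (Fin N → F) = N := by simp
  rw [hdom] at hrn
  have hker : finrank F (LinearMap.ker H.vecMulLinear) = 0 := by omega
  have : LinearMap.ker H.vecMulLinear = ⊥ := Submodule.finrank_eq_zero.mp hker
  have hinj : Function.Injective H.vecMulLinear := LinearMap.ker_eq_bot.mp this
  exact hinj (by simpa using hpq)

lemma row_mul {k n o : ℕ} (P : Matrix (Fin k) (Fin n) F) (H : Matrix (Fin n) (Fin o) F)
    (i : Fin k) : (P * H) i = P i ᵥ* H := by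
  ext j; simp [Matrix.mul_apply, Matrix.vecMul, dotProduct]

lemma rank_eq_finrank_span_rows {k o : ℕ} (A : Matrix (Fin k) (Fin o) F) :
    A.rank = finrank F (Submodule.span F (Set.range A)) := by
  rw [← Matrix.rank_transpose, Matrix.rank_eq_finrank_span_cols]; rfl

lemma span_coe_finBasis (S : Submodule F (Fin LZ → F)) :
    Submodule.span F (Set.range fun j : Fin (finrank F S) =>
      ((Module.finBasis F S j : S) : Fin LZ → F)) = S := by
  have : (fun j : Fin (finrank F S) => ((Module.finBasis F S j : S) : Fin LZ → F))
      = S.subtype ∘ (Module.finBasis F S) := rfl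
  rw [this, Set.range_comp, ← Submodule.map_span, Basis.span_eq, Submodule.map_subtype_top]

lemma qual_key {L : ℕ} {Fu Fv : Matrix (Fin N) (Fin L) F} {Hu Hv : Matrix (Fin N) (Fin LZ) F}
    (hc : CorrectPair F L N LZ Fu Fv Hu Hv)
    (J0 : Submodule F (Fin LZ → F)) (hJ0 : J0 ≤ rowSpan Hu ⊓ rowSpan Hv)
    (hagree : ∀ x ∈ J0, ∀ p q : Fin N → F, p ᵥ* Hu = x → q ᵥ* Hv = x → p ᵥ* Fu = q ᵥ* Fv) :
    L + finrank F J0 ≤ finrank F ↥(rowSpan Hu ⊓ rowSpan Hv) := by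
  classical
  set W := rowSpan Hu ⊓ rowSpan Hv with hW
  obtain ⟨C, hC⟩ := J0.exists_isCompl
  set D := W ⊓ C with hDdef
  have hinf : J0 ⊓ D = ⊥ := by
    rw [hDdef, ← inf_assoc, inf_eq_left.mpr hJ0, disjoint_iff.mp hC.disjoint]
  have hsup : J0 ⊔ D = W := by
    rw [sup_comm, hDdef, inf_sup_assoc_of_le _ hJ0, sup_comm, hC.sup_eq_top, inf_top_eq]
  set dJ := finrank F J0 with hdJ
  set dC := finrank F D with hdC
  have hWrank : finrank F W = dJ + dC := by
    have h1 := Submodule.finrank_sup_add_finrank_inf_eq J0 D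
    rw [hsup, hinf] at h1
    have h2 : finrank F ↥W = finrank F ↥J0 + finrank F ↥D := by simpa using h1
    omega
  set yJ : Fin dJ → (Fin LZ → F) := fun j => ((Module.finBasis F J0 j : J0) : Fin LZ → F) with hyJ
  set yD : Fin dC → (Fin LZ → F) := fun j => ((Module.finBasis F D j : D) : Fin LZ → F) with hyD
  set y : Fin dJ ⊕ Fin dC → (Fin LZ → F) := Sum.elim yJ yD with hy
  have hyJ0 : ∀ j, y (Sum.inl j) ∈ J0 := fun j => (Module.finBasis F J0 j).2
  have hyWmem : ∀ i, y i ∈ W := by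
    rintro (j | j)
    · exact hJ0 (hyJ0 j)
    · exact inf_le_left (α := Submodule F (Fin LZ → F))
        ((Module.finBasis F D j).2 : y (Sum.inr j) ∈ D)
  have hspan : Submodule.span F (Set.range y) = W := by
    rw [hy, Set.Sum.elim_range, Submodule.span_union, hyJ, hyD,
      span_coe_finBasis, span_coe_finBasis, hsup]
  set e := finSumFinEquiv (m := dJ) (n := dC) with he
  set x : Fin (dJ + dC) → (Fin LZ → F) := y ∘ e.symm with hxdef
  have hrangex : Set.range x = Set.range y := e.symm.surjective.range_comp y
  have hxW : ∀ i, x i ∈ W := fun i => hyWmem (e.symm i)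
  have hxu : ∀ i, x i ∈ rowSpan Hu := fun i => ((hxW i) : x i ∈ W).1
  have hxv : ∀ i, x i ∈ rowSpan Hv := fun i => ((hxW i) : x i ∈ W).2
  choose pp hpp using fun i => mem_rowSpan_iff.mp (hxu i)
  choose qq hqq using fun i => mem_rowSpan_iff.mp (hxv i)
  set Pu : Matrix (Fin (dJ + dC)) (Fin N) F := Matrix.of pp with hPu
  set Pv : Matrix (Fin (dJ + dC)) (Fin N) F := Matrix.of qq with hPv
  set X : Matrix (Fin (dJ + dC)) (Fin LZ) F := Matrix.of x with hX
  have hPuH : Pu * Hu = X := by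
    ext i j
    have : (Pu * Hu) i = x i := by rw [row_mul]; exact hpp i
    exact congrFun this j
  have hPvH : Pv * Hv = X := by
    ext i j
    have : (Pv * Hv) i = x i := by rw [row_mul]; exact hqq i
    exact congrFun this j
  have hXrank : X.rank = finrank F W := by
    rw [rank_eq_finrank_span_rows]
    have : Set.range X = Set.range y := hrangex
    rw [this, hspan]
  have hPuRank : Pu.rank = finrank F W := by
    refine le_antisymm ?_ ?_
    · calc Pu.rank ≤ Fintype.card (Fin (dJ + dC)) := Pu.rank_le_card_height
        _ = dJ + dC := Fintype.card_fin _
        _ = finrank F W := hWrank.symm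
    · rw [← hXrank, ← hPuH]; exact Matrix.rank_mul_le_left Pu Hu
  have hPvRank : Pv.rank = finrank F W := by
    refine le_antisymm ?_ ?_
    · calc Pv.rank ≤ Fintype.card (Fin (dJ + dC)) := Pv.rank_le_card_height
        _ = dJ + dC := Fintype.card_fin _
        _ = finrank F W := hWrank.symm
    · rw [← hXrank, ← hPvH]; exact Matrix.rank_mul_le_left Pv Hv
  have hDL : (Pu * Fu - Pv * Fv).rank = L :=
    hc (dJ + dC) Pu Pv (hPuH.trans hPvH.symm) hPuRank hPvRank
  set Dm : Matrix (Fin (dJ + dC)) (Fin L) F := Pu * Fu - Pv * Fv with hDm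
  have hrowD : ∀ i, Dm i = pp i ᵥ* Fu - qq i ᵥ* Fv := by
    intro i; ext j
    simp only [hDm, Matrix.sub_apply]
    rw [show (Pu * Fu) i j = (pp i ᵥ* Fu) j from congrFun (row_mul Pu Fu i) j,
      show (Pv * Fv) i j = (qq i ᵥ* Fv) j from congrFun (row_mul Pv Fv i) j]
    simp
  have hzero : ∀ j : Fin dJ, Dm (e (Sum.inl j)) = 0 := by
    intro j
    rw [hrowD]
    have hxj : x (e (Sum.inl j)) = y (Sum.inl j) := by rw [hxdef]; simp
    have := hagree (y (Sum.inl j)) (hyJ0 j) (pp (e (Sum.inl j))) (qq (e (Sum.inl j)))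
      (by rw [hpp, hxj]) (by rw [hqq, hxj])
    rw [this]; simp
  set G : Matrix (Fin dC) (Fin L) F := Matrix.of (fun j => Dm (e (Sum.inr j))) with hG
  have hspanle : Submodule.span F (Set.range Dm) ≤ Submodule.span F (Set.range G) := by
    rw [Submodule.span_le]
    rintro r ⟨i, rfl⟩
    rcases h : e.symm i with j | j
    · have : i = e (Sum.inl j) := by rw [← h]; simp
      rw [this, hzero]
      exact Submodule.zero_mem _
    · have : i = e (Sum.inr j) := by rw [← h]; simp
      rw [this]
      exact Submodule.subset_span ⟨j, rfl⟩
  have hLdC : L ≤ dC := by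
    calc L = Dm.rank := hDL.symm
      _ = finrank F (Submodule.span F (Set.range Dm)) := rank_eq_finrank_span_rows Dm
      _ ≤ finrank F (Submodule.span F (Set.range G)) := Submodule.finrank_mono hspanle
      _ = G.rank := (rank_eq_finrank_span_rows G).symm
      _ ≤ Fintype.card (Fin dC) := G.rank_le_card_height
      _ = dC := Fintype.card_fin _
  omega

lemma secure_row {L : ℕ} {Fu Fv : Matrix (Fin N) (Fin L) F} {Hu Hv : Matrix (Fin N) (Fin LZ) F}
    (hs : SecurePair F L N LZ Fu Fv Hu Hv) {p q : Fin N → F}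
    (h : p ᵥ* Hu = q ᵥ* Hv) : p ᵥ* Fu = q ᵥ* Fv := by
  have hrow : ∀ {o : ℕ} (A : Matrix (Fin N) (Fin o) F) (r : Fin N → F) (i : Fin 1),
      ((Matrix.of fun _ : Fin 1 => r) * A) i = r ᵥ* A := fun A r i => row_mul _ A i
  have h1 : (Matrix.of fun _ : Fin 1 => p) * Hu = (Matrix.of fun _ : Fin 1 => q) * Hv := by
    ext i j
    rw [hrow Hu p i, hrow Hv q i, h]
  have h2 := hs 1 _ _ h1
  calc p ᵥ* Fu = ((Matrix.of fun _ : Fin 1 => p) * Fu) 0 := (hrow Fu p 0).symm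
    _ = ((Matrix.of fun _ : Fin 1 => q) * Fv) 0 := congrFun h2 0
    _ = q ᵥ* Fv := hrow Fv q 0

/-! ### Combinatorial lemmas -/

def nodeSet {V : Type} (M : Finset (Sym2 V)) : Set V := {v | ∃ e ∈ M, v ∈ e}

def Conn {V : Type} (M : Finset (Sym2 V)) : Prop :=
  ∀ x y, x ∈ nodeSet M → y ∈ nodeSet M →
    Relation.ReflTransGen (fun w z => s(w, z) ∈ M) x y

lemma sym2_eq_of_mem {V : Type} {x w : V} {e : Sym2 V} (hx : x ∈ e) (hw : w ∈ e)
    (hxw : x ≠ w) : s(x, w) = e := by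
  induction e using Sym2.ind with
  | _ c d =>
    rw [Sym2.mem_iff] at hx hw
    rcases hx with rfl | rfl <;> rcases hw with rfl | rfl
    · exact absurd rfl hxw
    · rfl
    · exact Sym2.eq_swap
    · exact absurd rfl hxw

lemma conn_insert {V : Type} [DecidableEq V] {M' : Finset (Sym2 V)} (hc : Conn M')
    {e : Sym2 V} {w : V} (hwE : w ∈ e) (hwN : w ∈ nodeSet M') : Conn (insert e M') := by
  have hsym : Symmetric (fun a b : V => s(a, b) ∈ (insert e M')) := fun a b h => by
    show s(b, a) ∈ insert e M'
    rw [Sym2.eq_swap]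
    exact h
  have hmono : ∀ {x y : V}, Relation.ReflTransGen (fun a b => s(a, b) ∈ M') x y →
      Relation.ReflTransGen (fun a b => s(a, b) ∈ insert e M') x y :=
    fun h => Relation.ReflTransGen.mono (fun a b hab => Finset.mem_insert_of_mem hab) _ _ h
  have hstep : ∀ x, x ∈ nodeSet (insert e M') →
      Relation.ReflTransGen (fun a b => s(a, b) ∈ insert e M') x w := by
    rintro x ⟨e', he', hxe'⟩
    rcases Finset.mem_insert.mp he' with rfl | hm
    · by_cases hxw : x = w
      · subst hxw; exact Relation.ReflTransGen.refl
      · exact Relation.ReflTransGen.single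
          (show s(x, w) ∈ insert e' M' by
            rw [sym2_eq_of_mem hxe' hwE hxw]; exact Finset.mem_insert_self _ _)
    · exact hmono (hc x w ⟨e', hm, hxe'⟩ hwN)
  intro x y hx hy
  letI : Std.Symm (fun a b : V => s(a, b) ∈ (insert e M')) := ⟨fun a b h => hsym h⟩
  exact (hstep x hx).trans (Relation.ReflTransGen.symmetric.symm _ _ (hstep y hy))

lemma touch {V : Type} {M M' : Finset (Sym2 V)}
    (hconn : ∀ x y, x ∈ nodeSet M → y ∈ nodeSet M →
      Relation.ReflTransGen (fun w z => s(w, z) ∈ M) x y)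
    (hsub : M' ⊆ M) {e₁ : Sym2 V} (he₁ : e₁ ∈ M) (he₁' : e₁ ∉ M')
    {a0 : V} (ha0 : a0 ∈ nodeSet M') :
    ∃ e ∈ M, e ∉ M' ∧ ∃ w, w ∈ e ∧ w ∈ nodeSet M' := by
  obtain ⟨u, v, rfl⟩ : ∃ u v, e₁ = s(u, v) := by
    induction e₁ using Sym2.ind with | _ u v => exact ⟨u, v, rfl⟩
  have hu : u ∈ nodeSet M := ⟨s(u, v), he₁, Sym2.mem_mk_left u v⟩
  have ha0M : a0 ∈ nodeSet M := by
    obtain ⟨e', he', hx⟩ := ha0; exact ⟨e', hsub he', hx⟩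
  have main : ∀ {x y : V}, Relation.ReflTransGen (fun w z => s(w, z) ∈ M) x y →
      x ∈ nodeSet M' → y ∈ nodeSet M' ∨ ∃ e ∈ M, e ∉ M' ∧ ∃ w, w ∈ e ∧ w ∈ nodeSet M' := by
    intro x y h hx
    induction h with
    | refl => exact Or.inl hx
    | @tail b c h1 h2 ih =>
      rcases ih with hb | hf
      · by_cases hmem : s(b, c) ∈ M'
        · exact Or.inl ⟨s(b, c), hmem, Sym2.mem_mk_right b c⟩
        · exact Or.inr ⟨s(b, c), h2, hmem, b, Sym2.mem_mk_left b c, hb⟩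
      · exact Or.inr hf
  rcases main (hconn a0 u ha0M hu) ha0 with hu' | hf
  · exact ⟨s(u, v), he₁, he₁', u, Sym2.mem_mk_left u v, hu'⟩
  · exact hf

lemma grow {V : Type} [DecidableEq V] (R : V → Submodule F (Fin LZ → F))
    (L dK : ℕ) (hRN : ∀ v : V, finrank F (R v) ≤ N)
    (M : Finset (Sym2 V))
    (hLe : ∀ e ∈ M, ∀ u v : V, e = s(u, v) → L ≤ finrank F ↥(R u ⊓ R v))
    (hconnM : ∀ x y, x ∈ nodeSet M → y ∈ nodeSet M →
      Relation.ReflTransGen (fun w z => s(w, z) ∈ M) x y) :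
    ∀ (k : ℕ) (M' : Finset (Sym2 V)), (M \ M').card = k → M' ⊆ M → M'.Nonempty →
      Conn M' →
      dK ≤ finrank F ↥(⨅ v ∈ nodeSet M', R v) + (M'.card - 1) * (N - L) →
      dK ≤ finrank F ↥(⨅ v ∈ nodeSet M, R v) + (M.card - 1) * (N - L) := by
  intro k
  induction k with
  | zero =>
    intro M' hcard hsub _ _ hbound
    have hMM : M' = M := Finset.Subset.antisymm hsub
      (Finset.sdiff_eq_empty_iff_subset.mp (Finset.card_eq_zero.mp hcard))
    rwa [hMM] at hbound
  | succ k ih =>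
    intro M' hcard hsub hne hConn hbound
    have hsd : (M \ M').Nonempty := by
      rw [← Finset.card_pos, hcard]; omega
    obtain ⟨e₁, he₁⟩ := hsd
    have he₁M : e₁ ∈ M := (Finset.mem_sdiff.mp he₁).1
    have he₁M' : e₁ ∉ M' := (Finset.mem_sdiff.mp he₁).2
    obtain ⟨e', he'⟩ := hne
    obtain ⟨p0, q0, he'eq⟩ : ∃ p q, e' = s(p, q) := by
      induction e' using Sym2.ind with | _ p q => exact ⟨p, q, rfl⟩
    have ha0 : p0 ∈ nodeSet M' := ⟨e', he', by rw [he'eq]; exact Sym2.mem_mk_left _ _⟩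
    obtain ⟨e, heM, heM', w, hwe, hwN⟩ := touch hconnM hsub he₁M he₁M' ha0
    obtain ⟨u, v, rfl⟩ : ∃ u v, e = s(u, v) := by
      induction e using Sym2.ind with | _ u v => exact ⟨u, v, rfl⟩
    set M'' := insert s(u, v) M' with hM''
    have hnodes : nodeSet M'' = nodeSet M' ∪ {u, v} := by
      ext z
      simp only [nodeSet, hM'', Set.mem_setOf_eq, Finset.mem_insert, Set.mem_union,
        Set.mem_insert_iff, Set.mem_singleton_iff]
      constructor
      · rintro ⟨e0, (rfl | h), hz⟩
        · right; exact Sym2.mem_iff.mp hz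
        · left; exact ⟨e0, h, hz⟩
      · rintro (⟨e0, h, hz⟩ | h)
        · exact ⟨e0, Or.inr h, hz⟩
        · exact ⟨s(u, v), Or.inl rfl, Sym2.mem_iff.mpr h⟩
    have hJ : (⨅ x ∈ nodeSet M'', R x) = (⨅ x ∈ nodeSet M', R x) ⊓ (R u ⊓ R v) := by
      rw [hnodes, iInf_union, iInf_pair]
    have hAle : (⨅ x ∈ nodeSet M', R x) ≤ R w := iInf₂_le w hwN
    have hwuv : w = u ∨ w = v := Sym2.mem_iff.mp hwe
    have hBle : (R u ⊓ R v) ≤ R w := by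
      rcases hwuv with rfl | rfl
      · exact inf_le_left
      · exact inf_le_right
    have hLB : L ≤ finrank F ↥(R u ⊓ R v) := hLe _ heM u v rfl
    have hLN : L ≤ N := le_trans hLB
      (le_trans (Submodule.finrank_mono inf_le_left) (hRN u))
    have h1 := Submodule.finrank_sup_add_finrank_inf_eq (⨅ x ∈ nodeSet M', R x) (R u ⊓ R v)
    have h2 : finrank F ↥((⨅ x ∈ nodeSet M', R x) ⊔ (R u ⊓ R v)) ≤ N :=
      le_trans (Submodule.finrank_mono (sup_le hAle hBle)) (hRN w)
    have hstep : finrank F ↥(⨅ x ∈ nodeSet M', R x) ≤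
        finrank F ↥(⨅ x ∈ nodeSet M'', R x) + (N - L) := by
      rw [hJ]; omega
    have hcard'' : M''.card = M'.card + 1 := Finset.card_insert_of_notMem heM'
    have hsdiff : (M \ M'').card = k := by
      have hset : M \ M'' = (M \ M').erase s(u, v) := by
        ext z
        simp only [hM'', Finset.mem_sdiff, Finset.mem_erase, Finset.mem_insert]
        tauto
      rw [hset, Finset.card_erase_of_mem (Finset.mem_sdiff.mpr ⟨heM, heM'⟩), hcard]
      omega
    have hc1 : 1 ≤ M'.card := Finset.card_pos.mpr ⟨e', he'⟩
    have harith : (M''.card - 1) * (N - L) = (M'.card - 1) * (N - L) + (N - L) := by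
      rw [hcard'']
      obtain ⟨n, hn⟩ : ∃ n, M'.card = n + 1 := ⟨M'.card - 1, by omega⟩
      rw [hn, Nat.add_sub_cancel, Nat.add_sub_cancel, add_mul, one_mul]
    have hbound'' : dK ≤ finrank F ↥(⨅ v ∈ nodeSet M'', R v) + (M''.card - 1) * (N - L) := by
      refine le_trans hbound ?_
      rw [harith]
      calc finrank F ↥(⨅ v ∈ nodeSet M', R v) + (M'.card - 1) * (N - L)
          ≤ (finrank F ↥(⨅ v ∈ nodeSet M'', R v) + (N - L)) + (M'.card - 1) * (N - L) :=
            Nat.add_le_add_right hstep _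
        _ = finrank F ↥(⨅ v ∈ nodeSet M'', R v) + ((M'.card - 1) * (N - L) + (N - L)) := by
            ring
    exact ih M'' hsdiff (Finset.insert_subset heM hsub)
      ⟨_, Finset.mem_insert_self _ _⟩ (conn_insert hConn hwe hwN) hbound''

end CDSAux

open CDSAux Module Submodule

/-- **Core inequality of the converse proof of Theorem 1.** If `{a, b}` is a
qualified edge internal to an unqualified path `P`, and `M` is a set of `m`
qualified edges containing `{a, b}` that forms a tree on its `m + 1` incident
nodes and covers every node of `P`, then any linear CDS scheme satisfies
`m·L ≤ (m−1)·N`. -/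
theorem cds_tree_cover_inequality {V : Type} (F : Type) [Field F]
    (L N LZ : ℕ) (hL : 0 < L) (hN : 0 < N) (hLZ : 0 < LZ)
    (I : CDSInstance V)
    (Fm : V → Matrix (Fin N) (Fin L) F) (Hm : V → Matrix (Fin N) (Fin LZ) F)
    (hscheme : IsLinearCDSScheme F L N LZ I Fm Hm)
    (a b : V) (P : List V) (hP : IsUnqualPath I P)
    (hq : I.qual a b) (ha : a ∈ P) (hb : b ∈ P)
    (M : Finset (Sym2 V)) (m : ℕ) (hm : M.card = m)
    (heM : s(a, b) ∈ M)
    (hMq : ∀ e ∈ M, IsQualEdge I e)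
    (hconn : ∀ x y : V, (∃ e ∈ M, x ∈ e) → (∃ e ∈ M, y ∈ e) →
        Relation.ReflTransGen (fun w z => s(w, z) ∈ M) x y)
    (hnodes : Set.ncard {v : V | ∃ e ∈ M, v ∈ e} = m + 1)
    (hcover : ∀ v ∈ P, ∃ e ∈ M, v ∈ e) :
    m * L ≤ (m - 1) * N := by
  classical
  set R : V → Submodule F (Fin LZ → F) := fun v => rowSpan (Hm v) with hR
  have hfull : ∀ v, (Hm v).rank = N := hscheme.1
  have hRN : ∀ v, finrank F (R v) ≤ N := fun v => le_of_eq (finrank_rowSpan (hfull v))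
  -- every edge of M has intersection dimension at least L
  have hLe : ∀ e ∈ M, ∀ u v : V, e = s(u, v) → L ≤ finrank F ↥(R u ⊓ R v) := by
    intro e heM' u v hev
    obtain ⟨a', b', heq, hqual⟩ := hMq e heM'
    have hagreebot : ∀ (w z : V), ∀ x ∈ (⊥ : Submodule F (Fin LZ → F)),
        ∀ p q : Fin N → F, p ᵥ* Hm w = x → q ᵥ* Hm z = x → p ᵥ* Fm w = q ᵥ* Fm z := by
      intro w z x hx p q hp hq
      have hx0 : x = 0 := by simpa using hx
      have hp0 : p = 0 := vecMul_inj (hfull w) (by rw [hp, hx0, Matrix.zero_vecMul])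
      have hq0 : q = 0 := vecMul_inj (hfull z) (by rw [hq, hx0, Matrix.zero_vecMul])
      rw [hp0, hq0, Matrix.zero_vecMul, Matrix.zero_vecMul]
    rw [hev] at heq
    rcases Sym2.eq_iff.mp heq with ⟨rfl, rfl⟩ | ⟨rfl, rfl⟩
    · have hc := hscheme.2.1 u v hqual
      have := qual_key hc ⊥ bot_le (hagreebot u v)
      simpa using this
    · have hc := hscheme.2.1 v u hqual
      have := qual_key hc ⊥ bot_le (hagreebot v u)
      rw [inf_comm (a := R u)]
      simpa using this
  have hconnM : ∀ x y, x ∈ nodeSet M → y ∈ nodeSet M →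
      Relation.ReflTransGen (fun w z => s(w, z) ∈ M) x y :=
    fun x y hx hy => hconn x y hx hy
  have haN : a ∈ nodeSet M := ⟨s(a, b), heM, Sym2.mem_mk_left a b⟩
  have hbN : b ∈ nodeSet M := ⟨s(a, b), heM, Sym2.mem_mk_right a b⟩
  set dK := finrank F ↥(R a ⊓ R b) with hdK
  set dJ := finrank F ↥(⨅ v ∈ nodeSet M, R v) with hdJ
  -- base case data for the growth induction
  have hnodes0 : nodeSet ({s(a, b)} : Finset (Sym2 V)) = {a, b} := by
    ext z
    simp [nodeSet, Sym2.mem_iff]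
  have hbase : dK ≤ finrank F ↥(⨅ v ∈ nodeSet ({s(a, b)} : Finset (Sym2 V)), R v) +
      (({s(a, b)} : Finset (Sym2 V)).card - 1) * (N - L) := by
    rw [hnodes0, iInf_pair]
    simp
    exact le_rfl
  have hconn0 : Conn ({s(a, b)} : Finset (Sym2 V)) := by
    intro x y hx hy
    obtain ⟨ex, hex, hxe⟩ := hx
    obtain ⟨ey, hey, hye⟩ := hy
    rw [Finset.mem_singleton] at hex hey
    subst hex; subst hey
    by_cases hxy : x = y
    · subst hxy; exact Relation.ReflTransGen.refl
    · exact Relation.ReflTransGen.single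
        (by rw [sym2_eq_of_mem hxe hye hxy]; exact Finset.mem_singleton_self _)
  have hgrow : dK ≤ dJ + (M.card - 1) * (N - L) :=
    grow R L dK hRN M hLe hconnM ((M \ {s(a, b)}).card) {s(a, b)} rfl
      (Finset.singleton_subset_iff.mpr heM) ⟨_, Finset.mem_singleton_self _⟩
      hconn0 hbase
  -- the agreement property on the common space
  have hJle : ∀ w ∈ nodeSet M, (⨅ v ∈ nodeSet M, R v) ≤ R w := fun w hw => iInf₂_le w hw
  have hagree : ∀ x ∈ (⨅ v ∈ nodeSet M, R v), ∀ p q : Fin N → F,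
      p ᵥ* Hm a = x → q ᵥ* Hm b = x → p ᵥ* Fm a = q ᵥ* Fm b := by
    intro x hx p q hp hq
    have hxR : ∀ w ∈ nodeSet M, x ∈ R w := fun w hw => hJle w hw hx
    set val : V → (Fin L → F) := fun w =>
      if h : x ∈ R w then (mem_rowSpan_iff.mp h).choose ᵥ* Fm w else 0 with hval
    have val_eq : ∀ (w : V) (p' : Fin N → F), p' ᵥ* Hm w = x → val w = p' ᵥ* Fm w := by
      intro w p' hp'
      have hxw : x ∈ R w := mem_rowSpan_iff.mpr ⟨p', hp'⟩
      have hch : (mem_rowSpan_iff.mp hxw).choose = p' :=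
        vecMul_inj (hfull w) ((mem_rowSpan_iff.mp hxw).choose_spec.trans hp'.symm)
      rw [hval]
      simp only
      rw [dif_pos hxw, hch]
    have val_step : ∀ w z : V, I.unqual w z → x ∈ R w → x ∈ R z → val w = val z := by
      intro w z hunq hxw hxz
      obtain ⟨pw, hpw⟩ := mem_rowSpan_iff.mp hxw
      obtain ⟨pz, hpz⟩ := mem_rowSpan_iff.mp hxz
      rw [val_eq w pw hpw, val_eq z pz hpz]
      exact secure_row (hscheme.2.2 w z hunq) (hpw.trans hpz.symm)
    have aux : ∀ (c : V) (Q : List V), List.Chain I.unqual c Q → x ∈ R c →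
        (∀ w ∈ Q, x ∈ R w) → ∀ w ∈ Q, val w = val c := by
      intro c Q
      induction Q generalizing c with
      | nil => intro _ _ _ w hw; cases hw
      | cons d t ihQ =>
        intro hch hc hcov w hw
        unfold List.Chain at hch; rw [List.isChain_cons_cons] at hch
        have hxd : x ∈ R d := hcov d (List.mem_cons_self)
        have hdc : val d = val c := (val_step c d hch.1 hc hxd).symm
        rcases List.mem_cons.mp hw with rfl | hwt
        · exact hdc
        · exact (ihQ d hch.2 hxd (fun w' hw' => hcov w' (List.mem_cons_of_mem d hw')) w hwt).trans hdc
    obtain ⟨c, Q, rfl⟩ : ∃ c Q, P = c :: Q := by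
      cases P with
      | nil => exact absurd hP.1 (by simp)
      | cons c Q => exact ⟨c, Q, rfl⟩
    have hchain : List.Chain I.unqual c Q := hP.2.1
    have hcovR : ∀ w ∈ c :: Q, x ∈ R w := by
      intro w hw
      obtain ⟨ew, hewM, hwew⟩ := hcover w hw
      exact hxR w ⟨ew, hewM, hwew⟩
    have hvc : ∀ w ∈ c :: Q, val w = val c := by
      intro w hw
      rcases List.mem_cons.mp hw with rfl | hwt
      · rfl
      · exact aux c Q hchain (hcovR c (List.mem_cons_self))
          (fun w' hw' => hcovR w' (List.mem_cons_of_mem c hw')) w hwt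
    have hvab : val a = val b := (hvc a ha).trans (hvc b hb).symm
    rw [← val_eq a p hp, ← val_eq b q hq]
    exact hvab
  -- apply the key lemma at the qualified edge {a, b}
  have hJab : (⨅ v ∈ nodeSet M, R v) ≤ R a ⊓ R b :=
    le_inf (hJle a haN) (hJle b hbN)
  have hkey : L + dJ ≤ dK :=
    qual_key (hscheme.2.1 a b hq) (⨅ v ∈ nodeSet M, R v) hJab hagree
  -- conclude
  have hm1 : 1 ≤ m := by
    rw [← hm]
    exact Finset.card_pos.mpr ⟨_, heM⟩
  have hdKN : dK ≤ N := le_trans (Submodule.finrank_mono inf_le_left) (hRN a)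
  have hLN : L ≤ N := le_trans (Nat.le_add_right L dJ) (le_trans hkey hdKN)
  have hmcard : M.card = m := hm
  rw [hmcard] at hgrow
  obtain ⟨c, hc⟩ : ∃ c, c = (m - 1) * (N - L) := ⟨_, rfl⟩
  rw [← hc] at hgrow
  have hLc : L ≤ c := by omega
  obtain ⟨n, rfl⟩ : ∃ n, m = n + 1 := ⟨m - 1, by omega⟩
  rw [Nat.add_sub_cancel] at hc ⊢
  calc (n + 1) * L = n * L + L := by ring
    _ ≤ n * L + n * (N - L) := Nat.add_le_add_left (hc ▸ hLc) _
    _ = n * (L + (N - L)) := by ring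
    _ = n * N := by rw [Nat.add_sub_cancel' hLN]
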